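/- Let α be normal in F_{q^n} and β = g ∘ α. Then β is (α, b)-sociable if and only if for every root θ of x^n − 1 (in the algebraic closure of F_q), g(θ) ∉ {c·θ^j : c ∈ {0, ..., b−1}, j ∈ {0, ..., n−1}}. -/

import Mathlib

open Polynomial

variable {Fq Fqn : Type*}

/-- Frobenius action of a polynomial on a field element: `f ∘ α = Σ aᵢ α^(q^i)`. -/
noncomputable def circ [Field Fq] [Field Fqn] [Algebra Fq Fqn] (q : ℕ) (f : Fq[X]) (α : Fqn) : Fqn :=
  f.sum fun i a => algebraMap Fq Fqn a * α ^ q ^ i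

/-- `α` is a normal element: its conjugates `α, α^q, …, α^(q^(n-1))` form an `Fq`-basis. -/
def IsNormal (Fq : Type*) {Fqn : Type*} [Field Fq] [Field Fqn] [Algebra Fq Fqn]
    (q n : ℕ) (α : Fqn) : Prop :=
  LinearIndependent Fq (fun i : Fin n => α ^ q ^ (i : ℕ)) ∧
    Submodule.span Fq (Set.range fun i : Fin n => α ^ q ^ (i : ℕ)) = ⊤

/-- `A` is the annihilator of `α`: the monic polynomial of least degree with `A ∘ α = 0`. -/
def IsAnnihilator [Field Fq] [Field Fqn] [Algebra Fq Fqn] (q : ℕ) (α : Fqn) (A : Fq[X]) : Prop :=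
  A.Monic ∧ circ q A α = 0 ∧ ∀ B : Fq[X], B.Monic → circ q B α = 0 → A.degree ≤ B.degree

section Aux

variable [Field Fq] [Fintype Fq] [Field Fqn] [Algebra Fq Fqn]

set_option linter.unusedSectionVars false

lemma charFq (p m q : ℕ) (hp : p.Prime) (hm : 0 < m)
    (hpq : q = p ^ m) (hcard : Fintype.card Fq = q) : CharP Fq p := by
  obtain ⟨k, hr, hcq⟩ := FiniteField.card Fq (ringChar Fq)
  have : ringChar Fq = p := by
    have hdvd : p ∣ ringChar Fq ^ (k : ℕ) := by
      rw [← hcq, hcard, hpq]; exact dvd_pow_self p hm.ne'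
    exact ((Nat.prime_dvd_prime_iff_eq hp hr).mp (hp.dvd_of_dvd_pow hdvd)).symm
  exact ringChar.of_eq this

lemma exists_frob (p m q : ℕ) (hp : p.Prime) (hm : 0 < m)
    (hpq : q = p ^ m) (hcard : Fintype.card Fq = q) :
    ∃ σ : Fqn →ₗ[Fq] Fqn, ∀ x, σ x = x ^ q := by
  haveI : Fact p.Prime := ⟨hp⟩
  haveI : CharP Fq p := charFq p m q hp hm hpq hcard
  haveI : CharP Fqn p := charP_of_injective_algebraMap (algebraMap Fq Fqn).injective p
  refine ⟨{ toFun := fun x => x ^ q, map_add' := ?_, map_smul' := ?_ }, fun _ => rfl⟩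
  · intro x y; subst hpq; exact add_pow_char_pow ..
  · intro a x
    simp only [RingHom.id_apply, Algebra.smul_def, mul_pow, ← map_pow]
    congr 1
    rw [← hcard, FiniteField.pow_card]

lemma frob_pow_apply (q : ℕ) (σ : Fqn →ₗ[Fq] Fqn) (hσ : ∀ x, σ x = x ^ q)
    (i : ℕ) (x : Fqn) : (σ ^ i) x = x ^ q ^ i := by
  induction i generalizing x with
  | zero => simp
  | succ k ih =>
    rw [pow_succ', Module.End.mul_apply, hσ, ih, ← pow_mul, mul_comm, ← pow_succ']

lemma circ_aeval (q : ℕ) (σ : Fqn →ₗ[Fq] Fqn) (hσ : ∀ x, σ x = x ^ q)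
    (f : Fq[X]) (x : Fqn) : circ q f x = aeval σ f x := by
  rw [circ, aeval_def, eval₂_eq_sum, Polynomial.sum_def, Polynomial.sum_def,
    LinearMap.sum_apply]
  refine Finset.sum_congr rfl fun i _ => ?_
  rw [Module.End.mul_apply, Module.algebraMap_end_apply, frob_pow_apply q σ hσ,
    Algebra.smul_def]

lemma key_normal_iff_coprime (p m q n : ℕ) (hp : p.Prime) (hm : 0 < m)
    (hpq : q = p ^ m) (hcard : Fintype.card Fq = q)
    (hn : 0 < n) (hrank : Module.finrank Fq Fqn = n)
    (α : Fqn) (hα : IsNormal Fq q n α) (f : Fq[X]) :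
    IsNormal Fq q n (circ q f α) ↔ IsCoprime f ((X : Fq[X]) ^ n - 1) := by
  obtain ⟨σ, hσ⟩ := exists_frob p m q hp hm hpq hcard (Fqn := Fqn)
  have hpow : ∀ (i : ℕ) (x : Fqn), (σ ^ i) x = x ^ q ^ i := frob_pow_apply q σ hσ
  have hca : ∀ (h : Fq[X]) (x : Fqn), circ q h x = aeval σ h x := circ_aeval q σ hσ
  haveI : FiniteDimensional Fq Fqn :=
    FiniteDimensional.of_finrank_pos (by rw [hrank]; exact hn)
  haveI : Finite Fqn := Module.finite_of_finite Fq
  cases nonempty_fintype Fqn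
  have hcardn : Fintype.card Fqn = q ^ n := by
    rw [Module.card_eq_pow_finrank (K := Fq) (V := Fqn), hcard, hrank]
  have hσn : σ ^ n = 1 := by
    ext x
    rw [hpow, Module.End.one_apply, ← hcardn, FiniteField.pow_card]
  have hXn1 : aeval σ ((X : Fq[X]) ^ n - 1) = 0 := by
    rw [map_sub, map_pow, aeval_X, map_one, hσn, sub_self]
  have hmonic : ((X : Fq[X]) ^ n - 1).Monic := by
    have := monic_X_pow_sub_C (1 : Fq) hn.ne'
    rwa [map_one] at this
  have hdeg : ((X : Fq[X]) ^ n - 1).degree = n := by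
    have := degree_X_pow_sub_C hn (1 : Fq)
    rwa [map_one] at this
  have hzero : ∀ r : Fq[X], r.degree < n → circ q r α = 0 → r = 0 := by
    intro r hr h0
    by_contra hr0
    have hnd : r.natDegree < n := (natDegree_lt_iff_degree_lt hr0).mpr hr
    have hexp : circ q r α = ∑ i : Fin n, r.coeff i • α ^ q ^ (i : ℕ) := by
      rw [circ, Polynomial.sum_over_range' _ (by simp) n hnd, Fin.sum_univ_eq_sum_range
        (fun i => r.coeff i • α ^ q ^ i)]
      exact Finset.sum_congr rfl fun i _ => (Algebra.smul_def _ _).symm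
    have hlin := Fintype.linearIndependent_iff.mp hα.1 (fun i : Fin n => r.coeff i)
      (by rw [← hexp, h0])
    have hlead := Polynomial.leadingCoeff_ne_zero.mpr hr0
    exact hlead (hlin ⟨r.natDegree, hnd⟩)
  have hdvd : ∀ h : Fq[X], circ q h α = 0 → ((X : Fq[X]) ^ n - 1) ∣ h := by
    intro h h0
    rw [← modByMonic_eq_zero_iff_dvd hmonic]
    refine hzero _ (hdeg ▸ degree_modByMonic_lt h hmonic) ?_
    have hsplit : h = ((X : Fq[X]) ^ n - 1) * (h /ₘ (((X : Fq[X]) ^ n - 1))) +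
        h %ₘ ((X : Fq[X]) ^ n - 1) := by
      rw [add_comm]; exact (modByMonic_add_div h _).symm
    have : circ q h α = circ q (h %ₘ ((X : Fq[X]) ^ n - 1)) α := by
      conv_lhs => rw [hsplit]
      rw [hca, hca, map_add, LinearMap.add_apply, map_mul, Module.End.mul_apply, hXn1,
        LinearMap.zero_apply, zero_add]
    rw [← this, h0]
  set β := circ q f α with hβdef
  constructor
  · rintro ⟨-, hspan⟩
    have hmem : α ∈ Submodule.span Fq (Set.range fun i : Fin n => β ^ q ^ (i : ℕ)) := by
      rw [hspan]; trivial
    obtain ⟨c, hc⟩ := (Submodule.mem_span_range_iff_exists_fun Fq).mp hmem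
    set u : Fq[X] := ∑ i : Fin n, C (c i) * X ^ (i : ℕ) with hu
    have hcu : circ q (u * f) α = α := by
      rw [hca, map_mul, Module.End.mul_apply, ← hca f α, ← hβdef, hu, map_sum,
        LinearMap.sum_apply]
      rw [← hc]
      refine Finset.sum_congr rfl fun i _ => ?_
      rw [map_mul, aeval_C, map_pow, aeval_X, Module.End.mul_apply,
        Module.algebraMap_end_apply, hpow]
    have h0 : circ q (u * f - 1) α = 0 := by
      rw [hca, map_sub, LinearMap.sub_apply, map_one, Module.End.one_apply, ← hca, hcu,
        sub_self]
    obtain ⟨s, hs⟩ := hdvd _ h0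
    exact ⟨u, -s, by linear_combination hs⟩
  · rintro ⟨u, v, huv⟩
    have hαeq : aeval σ u β = α := by
      have h2 : circ q (u * f) α = α := by
        have hpoly : u * f = 1 - v * ((X : Fq[X]) ^ n - 1) := by linear_combination huv
        rw [hpoly, hca, map_sub, LinearMap.sub_apply, map_one, Module.End.one_apply,
          map_mul, Module.End.mul_apply, hXn1, LinearMap.zero_apply, map_zero, sub_zero]
      rw [hca, map_mul, Module.End.mul_apply, ← hca f α, ← hβdef] at h2
      exact h2
    set S := Submodule.span Fq (Set.range fun i : Fin n => β ^ q ^ (i : ℕ)) with hS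
    have hβmem : ∀ k : ℕ, β ^ q ^ k ∈ S := by
      intro k
      have h1 : β ^ q ^ k = β ^ q ^ (k % n) := by
        have : σ ^ k = σ ^ (k % n) := by
          conv_lhs => rw [← Nat.div_add_mod k n]
          rw [pow_add, pow_mul, hσn, one_pow, one_mul]
        rw [← hpow k β, this, hpow]
      rw [h1]
      exact Submodule.subset_span ⟨⟨k % n, Nat.mod_lt _ hn⟩, rfl⟩
    have hmemS : ∀ j : ℕ, α ^ q ^ j ∈ S := by
      intro j
      have h2 : α ^ q ^ j = circ q (X ^ j * u) β := by
        rw [hca, map_mul, map_pow, aeval_X, Module.End.mul_apply, hαeq, hpow]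
      rw [h2, circ, Polynomial.sum_def]
      refine Submodule.sum_mem S fun i _ => ?_
      rw [← Algebra.smul_def]
      exact Submodule.smul_mem S _ (hβmem i)
    have hspan : S = ⊤ := by
      rw [eq_top_iff, ← hα.2, Submodule.span_le]
      rintro x ⟨j, rfl⟩
      exact hmemS j
    refine ⟨?_, hspan⟩
    refine linearIndependent_of_top_le_span_of_card_eq_finrank hspan.ge ?_
    rw [Fintype.card_fin, hrank]

lemma circ_shift (p m q : ℕ) (hp : p.Prime) (hm : 0 < m)
    (hpq : q = p ^ m) (hcard : Fintype.card Fq = q)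
    (α : Fqn) (g : Fq[X]) (i c : ℕ) :
    (circ q g α) ^ q ^ i - c • α = circ q ((X : Fq[X]) ^ i * g - C (c : Fq)) α := by
  obtain ⟨σ, hσ⟩ := exists_frob p m q hp hm hpq hcard (Fqn := Fqn)
  conv_rhs => rw [circ_aeval q σ hσ]
  rw [map_sub, LinearMap.sub_apply, map_mul, map_pow, aeval_X,
    Module.End.mul_apply, ← circ_aeval q σ hσ, frob_pow_apply q σ hσ, aeval_C,
    Module.algebraMap_end_apply, Nat.cast_smul_eq_nsmul]

lemma coprime_iff_no_common_root (n : ℕ) (hn : 0 < n) (f : Fq[X]) :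
    IsCoprime f ((X : Fq[X]) ^ n - 1) ↔
      ∀ θ : AlgebraicClosure Fq, θ ^ n = 1 → aeval θ f ≠ 0 := by
  constructor
  · rintro ⟨u, v, huv⟩ θ hθ hf
    have := congrArg (aeval θ) huv
    simp only [map_add, map_mul, map_sub, map_pow, aeval_X, map_one, hf, hθ, sub_self,
      mul_zero, add_zero, zero_add] at this
    exact one_ne_zero this.symm
  · intro h
    by_contra hcop
    classical
    set d := EuclideanDomain.gcd f ((X : Fq[X]) ^ n - 1) with hd
    have hdnu : ¬IsUnit d := fun hu => hcop (EuclideanDomain.gcd_isUnit_iff.mp hu)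
    have hXn0 : ((X : Fq[X]) ^ n - 1) ≠ 0 := by
      have := monic_X_pow_sub_C (1 : Fq) hn.ne'
      rw [map_one] at this
      exact this.ne_zero
    have hd0 : d ≠ 0 := fun h0 => hXn0 (EuclideanDomain.gcd_eq_zero_iff.mp h0).2
    have hdegd : d.degree ≠ 0 := fun h0 => hdnu (isUnit_iff_degree_eq_zero.mpr h0)
    have hmapdeg : (d.map (algebraMap Fq (AlgebraicClosure Fq))).degree ≠ 0 := by
      rwa [degree_map_eq_of_injective (algebraMap Fq (AlgebraicClosure Fq)).injective]
    obtain ⟨θ, hθ⟩ := IsAlgClosed.exists_root _ hmapdeg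
    have hdθ : aeval θ d = 0 := by
      rwa [aeval_def, ← eval_map]
    have hfθ : aeval θ f = 0 := by
      obtain ⟨e, he⟩ := EuclideanDomain.gcd_dvd_left f ((X : Fq[X]) ^ n - 1)
      rw [he, map_mul, hdθ, zero_mul]
    have hθn : θ ^ n = 1 := by
      obtain ⟨e, he⟩ := EuclideanDomain.gcd_dvd_right f ((X : Fq[X]) ^ n - 1)
      have := congrArg (aeval θ) he
      simp only [map_sub, map_pow, aeval_X, map_one, map_mul, ← hd, hdθ, zero_mul] at this
      exact sub_eq_zero.mp this
    exact h θ hθn hfθ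
end Aux

lemma bridge {K : Type*} [Field K] (n b : ℕ) (hn : 0 < n) (G : K → K)
    (hroot : ∀ θ : K, θ ^ n = 1 → ∀ k : ℕ, θ ^ k = θ ^ (k % n)) :
    (∀ i : ℕ, i < n → ∀ c : ℕ, c < b → ∀ θ : K, θ ^ n = 1 → θ ^ i * G θ ≠ (c : K)) ↔
      (∀ θ : K, θ ^ n = 1 → ∀ c : ℕ, c < b → ∀ j : ℕ, j < n → G θ ≠ (c : K) * θ ^ j) := by
  have hpow1 : ∀ θ : K, θ ^ n = 1 → ∀ j : ℕ, j ≤ n → θ ^ ((n - j) % n) * θ ^ j = 1 := by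
    intro θ hθ j hj
    rw [← pow_add, hroot θ hθ, Nat.mod_add_mod, Nat.sub_add_cancel hj, Nat.mod_self, pow_zero]
  constructor
  · intro h θ hθ c hc j hj hcon
    exact h ((n - j) % n) (Nat.mod_lt _ hn) c hc θ hθ
      (by rw [hcon, mul_left_comm, hpow1 θ hθ j hj.le, mul_one])
  · intro h i hi c hc θ hθ hcon
    have h1 := hpow1 θ hθ i hi.le
    have hGc : (c : K) * θ ^ ((n - i) % n) = G θ := by
      linear_combination (G θ) * h1 - θ ^ ((n - i) % n) * hcon
    exact h θ hθ c hc ((n - i) % n) (Nat.mod_lt _ hn) hGc.symm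

theorem stmt16 (p m q n b : ℕ) [Field Fq] [Fintype Fq] [Field Fqn] [Algebra Fq Fqn]
    (hp : p.Prime) (hm : 0 < m) (hpq : q = p ^ m) (hcard : Fintype.card Fq = q)
    (hn : 0 < n) (hrank : Module.finrank Fq Fqn = n) (hb : b ≤ p)
    (α : Fqn) (hα : IsNormal Fq q n α) (g : Fq[X]) :
    (∀ i : ℕ, i < n → ∀ c : ℕ, c < b → IsNormal Fq q n ((circ q g α) ^ q ^ i - c • α)) ↔
      (∀ θ : AlgebraicClosure Fq, θ ^ n = 1 →
        ∀ c : ℕ, c < b → ∀ j : ℕ, j < n →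
          Polynomial.aeval θ g ≠ (c : AlgebraicClosure Fq) * θ ^ j) := by
  have hroot : ∀ θ : AlgebraicClosure Fq, θ ^ n = 1 → ∀ k : ℕ, θ ^ k = θ ^ (k % n) := by
    intro θ hθ k
    conv_lhs => rw [← Nat.div_add_mod k n]
    rw [pow_add, pow_mul, hθ, one_pow, one_mul]
  have step1 : (∀ i : ℕ, i < n → ∀ c : ℕ, c < b →
      IsNormal Fq q n ((circ q g α) ^ q ^ i - c • α)) ↔
      (∀ i : ℕ, i < n → ∀ c : ℕ, c < b → ∀ θ : AlgebraicClosure Fq, θ ^ n = 1 →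
        θ ^ i * aeval θ g ≠ (c : AlgebraicClosure Fq)) := by
    refine forall_congr' fun i => imp_congr_right fun hi =>
      forall_congr' fun c => imp_congr_right fun hc => ?_
    rw [circ_shift p m q hp hm hpq hcard α g i c,
      key_normal_iff_coprime p m q n hp hm hpq hcard hn hrank α hα _,
      coprime_iff_no_common_root n hn]
    refine forall_congr' fun θ => imp_congr_right fun hθ => ?_
    rw [map_sub, map_mul, map_pow, aeval_X, aeval_C, map_natCast]
    exact not_congr sub_eq_zero
  rw [step1]
  exact bridge n b hn (fun θ => aeval θ g) hroot
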